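/- The distance matrix of the d-cube Q_d (d ≥ 1) has eigenvalues d·2^{d-1} with multiplicity 1, 0 with multiplicity 2^d - d - 1, and -2^{d-1} with multiplicity d. -/

import Mathlib

open SimpleGraph Matrix Finset

/-- The distance matrix of a graph, with real entries. -/
noncomputable def distMatrix {V : Type*} [Fintype V] (G : SimpleGraph V) : Matrix V V ℝ :=
  Matrix.of fun x y => (G.dist x y : ℝ)

lemma distMatrix_isHermitian {V : Type*} [Fintype V] (G : SimpleGraph V) :
    (distMatrix G).IsHermitian := by
  ext x y
  simp [distMatrix, Matrix.conjTranspose_apply, SimpleGraph.dist_comm]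

/-- The multiset of eigenvalues (with multiplicity) of the distance matrix of `G`. -/
noncomputable def distSpec {V : Type*} [Fintype V] [DecidableEq V] (G : SimpleGraph V) :
    Multiset ℝ :=
  Finset.univ.val.map (distMatrix_isHermitian G).eigenvalues

/-- The `d`-cube: vertices are binary `d`-tuples, adjacent iff they differ in one coordinate. -/
def cubeGraph (d : ℕ) : SimpleGraph (Fin d → Bool) where
  Adj x y := hammingDist x y = 1
  symm := ⟨fun x y h => by show hammingDist y x = 1; rwa [hammingDist_comm]⟩
  loopless := ⟨fun x h => by simp [hammingDist_self] at h⟩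

open Polynomial

section Cube
variable {d : ℕ}

/-- the set of coordinates where a vertex is `true` -/
def bToSet (w : Fin d → Bool) : Finset (Fin d) := Finset.univ.filter fun j => w j = true

lemma bToSet_injective : Function.Injective (bToSet (d := d)) := by
  intro x z h
  funext j
  have : (x j = true) ↔ (z j = true) := by
    constructor <;> intro hj
    · have : j ∈ bToSet x := by simp [bToSet, hj]
      rw [h] at this; simpa [bToSet] using this
    · have : j ∈ bToSet z := by simp [bToSet, hj]
      rw [← h] at this; simpa [bToSet] using this
  cases hx : x j <;> cases hz : z j <;> simp_all

lemma bToSet_bijective : Function.Bijective (bToSet (d := d)) := by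
  rw [Fintype.bijective_iff_injective_and_card]
  exact ⟨bToSet_injective, by simp [Fintype.card_finset]⟩

end Cube

section Chi
variable {d : ℕ}



/-- sign of a boolean -/
def bsgn (b : Bool) : ℝ := if b then -1 else 1

lemma bsgn_sq (b : Bool) : bsgn b * bsgn b = 1 := by cases b <;> simp [bsgn]

lemma bsgn_not (b : Bool) : bsgn (!b) = - bsgn b := by cases b <;> simp [bsgn]

/-- character indexed by a finset -/
noncomputable def chi (S : Finset (Fin d)) (x : Fin d → Bool) : ℝ := ∏ j ∈ S, bsgn (x j)

lemma chi_empty (x : Fin d → Bool) : chi ∅ x = 1 := by simp [chi]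

lemma chi_mul_chi (S T : Finset (Fin d)) (x : Fin d → Bool) :
    chi S x * chi T x = chi (symmDiff S T) x := by
  have hS : S = (S \ T) ∪ (S ∩ T) := (Finset.sdiff_union_inter S T).symm
  have hT : T = (T \ S) ∪ (S ∩ T) := by
    rw [Finset.inter_comm]; exact (Finset.sdiff_union_inter T S).symm
  have dST : Disjoint (S \ T) (S ∩ T) := Finset.disjoint_sdiff_inter S T
  have dTS : Disjoint (T \ S) (T ∩ S) := Finset.disjoint_sdiff_inter T S
  have dAB : Disjoint (S \ T) (T \ S) := disjoint_sdiff_sdiff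
  have e1 : chi S x = (∏ j ∈ S \ T, bsgn (x j)) * ∏ j ∈ S ∩ T, bsgn (x j) := by
    rw [chi]; conv_lhs => rw [hS]
    exact Finset.prod_union dST
  have e2 : chi T x = (∏ j ∈ T \ S, bsgn (x j)) * ∏ j ∈ S ∩ T, bsgn (x j) := by
    rw [chi]; conv_lhs => rw [hT]
    rw [Finset.prod_union (by rw [Finset.inter_comm]; exact dTS)]
  have e3 : chi (symmDiff S T) x = (∏ j ∈ S \ T, bsgn (x j)) * ∏ j ∈ T \ S, bsgn (x j) := by
    rw [chi, symmDiff_def]; exact Finset.prod_union dAB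
  have hc : (∏ j ∈ S ∩ T, bsgn (x j)) * (∏ j ∈ S ∩ T, bsgn (x j)) = 1 := by
    rw [← Finset.prod_mul_distrib]
    exact Finset.prod_eq_one fun j _ => bsgn_sq (x j)
  rw [e1, e2, e3]
  calc (∏ j ∈ S \ T, bsgn (x j)) * (∏ j ∈ S ∩ T, bsgn (x j)) *
        ((∏ j ∈ T \ S, bsgn (x j)) * ∏ j ∈ S ∩ T, bsgn (x j))
      = (∏ j ∈ S \ T, bsgn (x j)) * (∏ j ∈ T \ S, bsgn (x j)) *
        ((∏ j ∈ S ∩ T, bsgn (x j)) * ∏ j ∈ S ∩ T, bsgn (x j)) := by ring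
    _ = _ := by rw [hc, mul_one]

lemma sum_chi (S : Finset (Fin d)) :
    ∑ x : Fin d → Bool, chi S x = if S = ∅ then (2 : ℝ) ^ d else 0 := by
  by_cases hS : S = ∅
  · subst hS
    simp only [chi_empty, Finset.sum_const, if_true]
    simp [Finset.card_univ, nsmul_eq_mul]
  · rw [if_neg hS]
    obtain ⟨i, hi⟩ := Finset.nonempty_iff_ne_empty.mpr hS
    set e : (Fin d → Bool) → (Fin d → Bool) := fun x => Function.update x i (!(x i)) with he
    have hinv : Function.Involutive e := by
      intro x
      funext j
      by_cases hj : j = i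
      · subst hj; simp [he, Function.update_self]
      · simp [he, Function.update_of_ne hj]
    have hbij : Function.Bijective e := hinv.bijective
    have hflip : ∀ x, chi S (e x) = - chi S x := by
      intro x
      rw [chi, chi, ← Finset.mul_prod_erase S _ hi, ← Finset.mul_prod_erase S _ hi]
      have h1 : bsgn (e x i) = - bsgn (x i) := by
        simp [he, Function.update_self, bsgn_not]
      have h2 : ∀ j ∈ S.erase i, bsgn (e x j) = bsgn (x j) := by
        intro j hj
        have : j ≠ i := Finset.ne_of_mem_erase hj
        simp [he, Function.update_of_ne this]
      rw [h1, Finset.prod_congr rfl h2]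
      ring
    have hcomp : ∑ x : Fin d → Bool, chi S (e x) = ∑ x : Fin d → Bool, chi S x :=
      Function.Bijective.sum_comp hbij (chi S)
    have : ∑ x : Fin d → Bool, chi S x = - ∑ x : Fin d → Bool, chi S x := by
      conv_lhs => rw [← hcomp]
      rw [Finset.sum_congr rfl fun x _ => hflip x, Finset.sum_neg_distrib]
    linarith [this]

/-- eigenvalue attached to a subset -/
noncomputable def lam (d : ℕ) (S : Finset (Fin d)) : ℝ :=
  if S = ∅ then (d : ℝ) * 2 ^ (d - 1) else if S.card = 1 then -(2 ^ (d - 1) : ℝ) else 0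

lemma hamming_expand (x y : Fin d → Bool) :
    (hammingDist x y : ℝ) = ∑ i : Fin d, (1 - bsgn (x i) * bsgn (y i)) / 2 := by
  rw [show hammingDist x y = #(Finset.univ.filter fun i => x i ≠ y i) from rfl]
  rw [Finset.card_filter]
  push_cast
  refine Finset.sum_congr rfl fun i _ => ?_
  cases hx : x i <;> cases hy : y i <;> norm_num [bsgn]

lemma chi_single (i : Fin d) (y : Fin d → Bool) : chi {i} y = bsgn (y i) := by
  simp [chi]

lemma key_sum (hd : 1 ≤ d) (S : Finset (Fin d)) (x : Fin d → Bool) :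
    ∑ y : Fin d → Bool, (hammingDist x y : ℝ) * chi S y = lam d S * chi S x := by
  have h2 : ((2 : ℝ) ^ d) / 2 = 2 ^ (d - 1) := by
    rw [div_eq_iff (by norm_num : (2:ℝ) ≠ 0), ← pow_succ]
    congr 1
    omega
  have expand : ∀ y, (hammingDist x y : ℝ) * chi S y
      = ∑ i : Fin d, ((chi S y) - bsgn (x i) * chi (symmDiff {i} S) y) / 2 := by
    intro y
    rw [hamming_expand, Finset.sum_mul]
    refine Finset.sum_congr rfl fun i _ => ?_
    rw [← chi_mul_chi {i} S y, chi_single]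
    ring
  rw [Finset.sum_congr rfl fun y _ => expand y]
  rw [Finset.sum_comm]
  have inner : ∀ i : Fin d, ∑ y : Fin d → Bool,
      ((chi S y) - bsgn (x i) * chi (symmDiff {i} S) y) / 2
      = ((if S = ∅ then (2:ℝ)^d else 0) - bsgn (x i) * (if S = {i} then (2:ℝ)^d else 0)) / 2 := by
    intro i
    rw [← Finset.sum_div]
    congr 1
    rw [Finset.sum_sub_distrib, sum_chi, ← Finset.mul_sum, sum_chi]
    congr 2
    have hiff : (S = {i}) ↔ (symmDiff ({i} : Finset (Fin d)) S = ∅) := by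
      rw [← Finset.bot_eq_empty, symmDiff_eq_bot, eq_comm]
    exact (if_congr hiff rfl rfl).symm
  rw [Finset.sum_congr rfl fun i _ => inner i]
  by_cases hS : S = ∅
  · subst hS
    have hne : ∀ i : Fin d, ¬((∅ : Finset (Fin d)) = {i}) :=
      fun i h => Finset.singleton_ne_empty i h.symm
    calc ∑ i : Fin d, ((if (∅:Finset (Fin d)) = ∅ then (2:ℝ)^d else 0)
          - bsgn (x i) * if (∅:Finset (Fin d)) = {i} then (2:ℝ)^d else 0)/2
        = ∑ _i : Fin d, (2:ℝ)^(d-1) := by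
          refine Finset.sum_congr rfl fun i _ => ?_
          rw [if_pos rfl, if_neg (hne i), mul_zero, sub_zero, h2]
      _ = (d:ℝ) * 2^(d-1) := by
          rw [Finset.sum_const, Finset.card_univ, Fintype.card_fin, nsmul_eq_mul]
      _ = lam d ∅ * chi ∅ x := by
          rw [show lam d ∅ = (d:ℝ)*2^(d-1) from if_pos rfl, show chi (∅ : Finset (Fin d)) x = 1 by
            simp [chi], mul_one]
  · by_cases hS1 : S.card = 1
    · obtain ⟨i0, hi0⟩ := Finset.card_eq_one.mp hS1
      subst hi0
      have hiff : ∀ i : Fin d, (({i0}:Finset (Fin d)) = {i}) ↔ i = i0 := fun i => by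
        rw [Finset.singleton_inj, eq_comm]
      calc ∑ i : Fin d, ((if ({i0}:Finset (Fin d)) = ∅ then (2:ℝ)^d else 0)
            - bsgn (x i) * if ({i0}:Finset (Fin d)) = {i} then (2:ℝ)^d else 0)/2
          = ∑ i : Fin d, (if i = i0 then -(bsgn (x i) * (2:ℝ)^d)/2 else 0) := by
            refine Finset.sum_congr rfl fun i _ => ?_
            rw [if_neg hS, if_congr (hiff i) rfl rfl]
            by_cases h : i = i0 <;> simp [h] <;> ring
        _ = -(bsgn (x i0) * 2^d)/2 := by simp
        _ = lam d {i0} * chi {i0} x := by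
            rw [chi_single, show lam d {i0} = -(2:ℝ)^(d-1) from by
              rw [lam, if_neg hS, if_pos hS1], ← h2]
            ring
    · calc ∑ i : Fin d, ((if S = ∅ then (2:ℝ)^d else 0)
            - bsgn (x i) * if S = {i} then (2:ℝ)^d else 0)/2
          = ∑ _i : Fin d, (0:ℝ) := by
            refine Finset.sum_congr rfl fun i _ => ?_
            rw [if_neg hS, if_neg (fun h => hS1 (by rw [h]; exact Finset.card_singleton i))]
            ring
        _ = 0 := Finset.sum_const_zero
        _ = lam d S * chi S x := by rw [lam, if_neg hS, if_neg hS1, zero_mul]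

end Chi

section Dist
lemma cube_exists_walk (d : ℕ) : ∀ (n : ℕ) (x y : Fin d → Bool), hammingDist x y = n →
    ∃ p : (cubeGraph d).Walk x y, p.length = n := by
  intro n
  induction n with
  | zero => intro x y h; rw [hammingDist_eq_zero] at h; subst h; exact ⟨SimpleGraph.Walk.nil, rfl⟩
  | succ n ih =>
    intro x y h
    have hxy : x ≠ y := by
      intro he; subst he; simp [hammingDist_self] at h
    have : ∃ i, x i ≠ y i := by
      by_contra hc
      push_neg at hc
      exact hxy (funext hc)
    obtain ⟨i, hi⟩ := this
    set x' := Function.update x i (y i) with hx'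
    have hmem : i ∈ ({j | x j ≠ y j} : Finset (Fin d)) := by simp [hi]
    have hfil : ({j | x j ≠ y j} : Finset (Fin d)).erase i = (Finset.univ.filter fun j => x' j ≠ y j) := by
      ext j
      by_cases hj : j = i
      · subst hj; simp [hx', Function.update_self]
      · simp [hj, hx', Function.update_of_ne hj]
    have h2 : hammingDist x' y = n := by
      have := Finset.card_erase_of_mem hmem
      rw [hfil] at this
      rw [show hammingDist x' y = #(Finset.univ.filter fun j => x' j ≠ y j) from rfl, this]
      rw [show hammingDist x y = #(Finset.univ.filter fun j => x j ≠ y j) from rfl] at h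
      omega
    have hadj : (cubeGraph d).Adj x x' := by
      show hammingDist x x' = 1
      rw [hammingDist]
      rw [Finset.card_eq_one]
      refine ⟨i, ?_⟩
      ext j
      by_cases hj : j = i
      · subst hj; simp [hx', Function.update_self, hi]
      · simp [hj, hx', Function.update_of_ne hj]
    obtain ⟨p, hp⟩ := ih x' y h2
    exact ⟨SimpleGraph.Walk.cons hadj p, by simp [hp]⟩

lemma cube_walk_le (d : ℕ) {x y : Fin d → Bool} (p : (cubeGraph d).Walk x y) :
    hammingDist x y ≤ p.length := by
  induction p with
  | nil => simp
  | cons huv q ih =>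
    rename_i u v w
    calc hammingDist u w ≤ hammingDist u v + hammingDist v w := hammingDist_triangle _ _ _
    _ ≤ 1 + q.length := by have h1 : hammingDist u v = 1 := huv; omega
    _ = (SimpleGraph.Walk.cons huv q).length := by simp [Nat.add_comm]

lemma cube_dist_eq (d : ℕ) (x y : Fin d → Bool) :
    (cubeGraph d).dist x y = hammingDist x y := by
  obtain ⟨p, hp⟩ := cube_exists_walk d (hammingDist x y) x y rfl
  refine le_antisymm (hp ▸ SimpleGraph.dist_le p) ?_
  obtain ⟨q, hq⟩ := (p.reachable).exists_walk_length_eq_dist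
  rw [← hq]
  exact cube_walk_le d q

end Dist

section CP
variable {n R : Type*} [Fintype n] [DecidableEq n] [CommRing R]


lemma my_charpoly_units_conj (u : (Matrix n n R)ˣ) (A : Matrix n n R) :
    ((u : Matrix n n R) * A * (↑u⁻¹ : Matrix n n R)).charpoly = A.charpoly := by
  let f : Matrix n n R →+* Matrix n n R[X] := (C : R →+* R[X]).mapMatrix
  let v : (Matrix n n R[X])ˣ := Units.map (f : Matrix n n R →* Matrix n n R[X]) u
  have hv : (v : Matrix n n R[X]) = f (u : Matrix n n R) := rfl
  have hvinv : (↑v⁻¹ : Matrix n n R[X]) = f (↑u⁻¹ : Matrix n n R) := rfl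
  have key : charmatrix ((u : Matrix n n R) * A * (↑u⁻¹ : Matrix n n R))
      = (v : Matrix n n R[X]) * charmatrix A * (↑v⁻¹ : Matrix n n R[X]) := by
    rw [charmatrix, charmatrix, mul_sub, sub_mul, hv, hvinv]
    congr 1
    · rw [mul_assoc, scalar_commute (X : R[X]) (fun r => Commute.all _ _) _]
      rw [← mul_assoc, ← _root_.map_mul f,
        show (u : Matrix n n R) * (↑u⁻¹ : Matrix n n R) = 1 from u.mul_inv, _root_.map_one f, one_mul]
    · simp only [RingHom.mapMatrix_apply, f]
      rw [← Matrix.map_mul, ← Matrix.map_mul]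
  rw [Matrix.charpoly, key, det_mul, det_mul, Matrix.charpoly]
  rw [mul_right_comm]
  have : det (v : Matrix n n R[X]) * det (↑v⁻¹ : Matrix n n R[X]) = 1 := by
    rw [← det_mul, v.mul_inv, det_one]
  rw [this, one_mul]

lemma my_charpoly_diagonal (v : n → R) :
    (Matrix.diagonal v).charpoly = ∏ i : n, (X - C (v i)) := by
  have : charmatrix (Matrix.diagonal v) = Matrix.diagonal fun i => (X : R[X]) - C (v i) := by
    ext i j
    by_cases h : i = j
    · subst h; simp
    · simp [charmatrix_apply_ne _ _ _ h, Matrix.diagonal_apply_ne _ h]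
  rw [Matrix.charpoly, this, det_diagonal]

lemma my_hermitian_charpoly {n : Type*} [Fintype n] [DecidableEq n]
    {A : Matrix n n ℝ} (hA : A.IsHermitian) :
    A.charpoly = ∏ i : n, (X - C (hA.eigenvalues i)) := by
  have hsp := hA.spectral_theorem
  set U := hA.eigenvectorUnitary with hU
  let u : (Matrix n n ℝ)ˣ := Unitary.toUnits U
  have hu : (u : Matrix n n ℝ) = (U : Matrix n n ℝ) := rfl
  have huinv : (↑u⁻¹ : Matrix n n ℝ) = star (U : Matrix n n ℝ) := rfl
  have hdiag : Matrix.diagonal ((RCLike.ofReal : ℝ → ℝ) ∘ hA.eigenvalues)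
      = Matrix.diagonal hA.eigenvalues := by
    congr 1
  conv_lhs => rw [show A = (u : Matrix n n ℝ) * Matrix.diagonal hA.eigenvalues *
    (↑u⁻¹ : Matrix n n ℝ) by rw [hu, huinv, ← hdiag]; exact hsp]
  rw [my_charpoly_units_conj, my_charpoly_diagonal]

end CP
section Had
variable {d : ℕ}

lemma chi_symm (x y : Fin d → Bool) : chi (bToSet y) x = chi (bToSet x) y := by
  rw [chi, chi, bToSet, bToSet, Finset.prod_filter, Finset.prod_filter]
  refine Finset.prod_congr rfl fun j _ => ?_
  cases hx : x j <;> cases hy : y j <;> simp [bsgn]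

/-- scaled Hadamard matrix -/
noncomputable def Hmat (d : ℕ) : Matrix (Fin d → Bool) (Fin d → Bool) ℝ :=
  Matrix.of fun x w => chi (bToSet w) x

lemma Hmat_mul_Hmat : Hmat d * Hmat d = ((2:ℝ)^d) • 1 := by
  ext x z
  rw [Matrix.mul_apply]
  have : ∀ y, Hmat d x y * Hmat d y z = chi (symmDiff (bToSet x) (bToSet z)) y := by
    intro y
    show chi (bToSet y) x * chi (bToSet z) y = _
    rw [chi_symm, chi_mul_chi]
  rw [Finset.sum_congr rfl fun y _ => this y, sum_chi]
  rw [Matrix.smul_apply, Matrix.one_apply]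
  have hiff : (symmDiff (bToSet x) (bToSet z) = ∅) ↔ x = z := by
    rw [← Finset.bot_eq_empty, symmDiff_eq_bot]
    exact ⟨fun h => bToSet_injective h, fun h => by rw [h]⟩
  rw [if_congr hiff rfl rfl]
  by_cases h : x = z <;> simp [h]

noncomputable def Hunit (d : ℕ) : (Matrix (Fin d → Bool) (Fin d → Bool) ℝ)ˣ where
  val := Hmat d
  inv := ((2:ℝ)^d)⁻¹ • Hmat d
  val_inv := by
    rw [Matrix.mul_smul, Hmat_mul_Hmat, smul_smul,
      inv_mul_cancel₀ (by positivity : ((2:ℝ)^d) ≠ 0), one_smul]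
  inv_val := by
    rw [Matrix.smul_mul, Hmat_mul_Hmat, smul_smul,
      inv_mul_cancel₀ (by positivity : ((2:ℝ)^d) ≠ 0), one_smul]

lemma distMatrix_cube_mul_Hmat (hd : 1 ≤ d) :
    distMatrix (cubeGraph d) * Hmat d
      = Hmat d * Matrix.diagonal (fun w => lam d (bToSet w)) := by
  ext x w
  rw [Matrix.mul_apply, Matrix.mul_diagonal]
  have : ∀ y, distMatrix (cubeGraph d) x y * Hmat d y w
      = (hammingDist x y : ℝ) * chi (bToSet w) y := by
    intro y
    show ((cubeGraph d).dist x y : ℝ) * chi (bToSet w) y = _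
    rw [cube_dist_eq]
  rw [Finset.sum_congr rfl fun y _ => this y, key_sum hd]
  show lam d (bToSet w) * chi (bToSet w) x = chi (bToSet w) x * lam d (bToSet w)
  ring

lemma distMatrix_cube_conj (hd : 1 ≤ d) :
    distMatrix (cubeGraph d) = (Hunit d : Matrix _ _ ℝ) *
      Matrix.diagonal (fun w => lam d (bToSet w)) * (↑(Hunit d)⁻¹ : Matrix _ _ ℝ) := by
  have h1 : (Hunit d : Matrix _ _ ℝ) = Hmat d := rfl
  calc distMatrix (cubeGraph d)
      = distMatrix (cubeGraph d) * ((Hunit d : Matrix _ _ ℝ) * (↑(Hunit d)⁻¹ : Matrix _ _ ℝ)) := by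
        rw [(Hunit d).mul_inv, Matrix.mul_one]
    _ = (distMatrix (cubeGraph d) * (Hunit d : Matrix _ _ ℝ)) * (↑(Hunit d)⁻¹ : Matrix _ _ ℝ) := by
        rw [Matrix.mul_assoc]
    _ = _ := by rw [h1, distMatrix_cube_mul_Hmat hd, ← h1]

lemma charpoly_distMatrix_cube (hd : 1 ≤ d) :
    (distMatrix (cubeGraph d)).charpoly
      = ∏ w : Fin d → Bool, (X - C (lam d (bToSet w))) := by
  rw [distMatrix_cube_conj hd, my_charpoly_units_conj, my_charpoly_diagonal]

end Had
section Count
variable {d : ℕ}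

lemma card_filter_card_eq_one :
    #((Finset.univ : Finset (Finset (Fin d))).filter fun S => #S = 1) = d := by
  have h1 : ((Finset.univ : Finset (Finset (Fin d))).filter fun S => #S = 1)
      = Finset.powersetCard 1 (Finset.univ : Finset (Fin d)) := by
    rw [Finset.powersetCard_eq_filter, Finset.powerset_univ]
  rw [h1, Finset.card_powersetCard]
  simp

lemma lam_multiset (hd : 1 ≤ d) :
    Multiset.map (lam d) (Finset.univ : Finset (Finset (Fin d))).val =
      Multiset.replicate 1 ((d : ℝ) * 2 ^ (d - 1)) +
      Multiset.replicate (2 ^ d - d - 1) (0 : ℝ) +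
      Multiset.replicate d (-(2 ^ (d - 1) : ℝ)) := by
  classical
  set m : Multiset (Finset (Fin d)) := (Finset.univ : Finset (Finset (Fin d))).val with hm
  have hsplit1 : m = Multiset.filter (fun S => S = ∅) m
      + Multiset.filter (fun S => ¬ S = ∅) m := (Multiset.filter_add_not _ m).symm
  have hsplit2 : Multiset.filter (fun S => ¬ S = ∅) m
      = Multiset.filter (fun S => #S = 1) (Multiset.filter (fun S => ¬ S = ∅) m)
      + Multiset.filter (fun S => ¬ #S = 1) (Multiset.filter (fun S => ¬ S = ∅) m) :=
    (Multiset.filter_add_not _ _).symm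
  -- identify the pieces
  have hF1 : Multiset.filter (fun S => S = ∅) m = ((Finset.univ.filter
      (fun S : Finset (Fin d) => S = ∅)).val) := rfl
  have hc1 : Multiset.card (Multiset.filter (fun S => S = ∅) m) = 1 := by
    rw [hF1]
    show #(Finset.univ.filter (fun S : Finset (Fin d) => S = ∅)) = 1
    rw [Finset.filter_eq']
    simp
  have hF2eq : Multiset.filter (fun S => #S = 1) (Multiset.filter (fun S => ¬ S = ∅) m)
      = Multiset.filter (fun S => #S = 1) m := by
    rw [Multiset.filter_filter]
    refine Multiset.filter_congr fun S _ => ?_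
    constructor
    · exact fun h => h.1
    · intro h
      refine ⟨h, ?_⟩
      intro he
      rw [he] at h
      simp at h
  have hc2 : Multiset.card (Multiset.filter (fun S => #S = 1)
      (Multiset.filter (fun S => ¬ S = ∅) m)) = d := by
    rw [hF2eq]
    convert card_filter_card_eq_one (d := d)
    simp only [hm, Finset.card_def, Finset.filter_val]
    exact congrArg Multiset.card (Multiset.filter_congr fun _ _ => Iff.rfl)
  have hcm : Multiset.card m = 2 ^ d := by
    rw [hm]
    show (Finset.univ : Finset (Finset (Fin d))).card = 2 ^ d
    simp [Fintype.card_finset]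
  have hc3 : Multiset.card (Multiset.filter (fun S => ¬ #S = 1)
      (Multiset.filter (fun S => ¬ S = ∅) m)) = 2 ^ d - d - 1 := by
    have t1 := congrArg Multiset.card hsplit1
    have t2 := congrArg Multiset.card hsplit2
    rw [Multiset.card_add] at t1 t2
    omega
  -- map lam on each piece
  have m1 : Multiset.map (lam d) (Multiset.filter (fun S => S = ∅) m)
      = Multiset.replicate 1 ((d : ℝ) * 2 ^ (d - 1)) := by
    rw [Multiset.map_congr rfl (fun S hS => ?_), Multiset.map_const', hc1]
    have : S = ∅ := (Multiset.mem_filter.mp hS).2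
    rw [this, lam, if_pos rfl]
  have m2 : Multiset.map (lam d) (Multiset.filter (fun S => #S = 1)
      (Multiset.filter (fun S => ¬ S = ∅) m))
      = Multiset.replicate d (-(2 ^ (d - 1) : ℝ)) := by
    rw [Multiset.map_congr rfl (fun S hS => ?_), Multiset.map_const', hc2]
    have h1 : #S = 1 := (Multiset.mem_filter.mp hS).2
    have h2 : ¬ S = ∅ := (Multiset.mem_filter.mp (Multiset.mem_filter.mp hS).1).2
    rw [lam, if_neg h2, if_pos h1]
  have m3 : Multiset.map (lam d) (Multiset.filter (fun S => ¬ #S = 1)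
      (Multiset.filter (fun S => ¬ S = ∅) m))
      = Multiset.replicate (2 ^ d - d - 1) (0 : ℝ) := by
    rw [Multiset.map_congr rfl (fun S hS => ?_), Multiset.map_const', hc3]
    have h1 : ¬ #S = 1 := (Multiset.mem_filter.mp hS).2
    have h2 : ¬ S = ∅ := (Multiset.mem_filter.mp (Multiset.mem_filter.mp hS).1).2
    rw [lam, if_neg h2, if_neg h1]
  conv_lhs => rw [hsplit1, hsplit2]
  rw [Multiset.map_add, Multiset.map_add, m1, m2, m3]
  rw [add_comm (Multiset.replicate d _) (Multiset.replicate (2^d-d-1) _), ← add_assoc]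

end Count

theorem dcube_stmt13 (d : ℕ) (hd : 1 ≤ d) :
    distSpec (cubeGraph d) =
      Multiset.replicate 1 ((d : ℝ) * 2 ^ (d - 1)) +
      Multiset.replicate (2 ^ d - d - 1) (0 : ℝ) +
      Multiset.replicate d (-(2 ^ (d - 1) : ℝ)) := by
  classical
  set L : Multiset ℝ := Finset.univ.val.map (fun w : Fin d → Bool => lam d (bToSet w)) with hL
  have h1 : (distMatrix (cubeGraph d)).charpoly
      = ((distSpec (cubeGraph d)).map (fun a => X - C a)).prod := by
    rw [my_hermitian_charpoly (distMatrix_isHermitian (cubeGraph d)), distSpec,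
      Finset.prod_eq_multiset_prod, Multiset.map_map]
    rfl
  have h2 : (distMatrix (cubeGraph d)).charpoly = (L.map (fun a => X - C a)).prod := by
    rw [charpoly_distMatrix_cube hd, hL, Finset.prod_eq_multiset_prod, Multiset.map_map]
    rfl
  have hspec : distSpec (cubeGraph d) = L := by
    have := congrArg Polynomial.roots (h1.symm.trans h2)
    rwa [Polynomial.roots_multiset_prod_X_sub_C, Polynomial.roots_multiset_prod_X_sub_C] at this
  have hLval : L = Multiset.map (lam d) (Finset.univ : Finset (Finset (Fin d))).val := by
    have hemb : Finset.map ⟨bToSet, bToSet_injective⟩ (Finset.univ : Finset (Fin d → Bool))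
        = (Finset.univ : Finset (Finset (Fin d))) := by
      apply Finset.eq_univ_of_card
      rw [Finset.card_map]
      simp [Fintype.card_finset]
    have hval : Multiset.map bToSet (Finset.univ : Finset (Fin d → Bool)).val
        = (Finset.univ : Finset (Finset (Fin d))).val := by
      have := congrArg Finset.val hemb
      rwa [Finset.map_val] at this
    rw [hL, show (fun w : Fin d → Bool => lam d (bToSet w)) = lam d ∘ bToSet from rfl,
      ← Multiset.map_map, hval]
  rw [hspec, hLval, lam_multiset hd]
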